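/- Suppose an estimator θ̂ satisfies |θ̂ − θ⁰|_∞ ≤ c for some c > 0, and let θ⁰_min = min_{j ∈ T} |θ⁰_j| where T = supp(θ⁰). If a threshold δ satisfies c < δ ≤ θ⁰_min/2, then the thresholded estimator θ̂^{th}_j = θ̂_j 𝟙(|θ̂_j| ≥ δ) has support exactly T, i.e., {j : θ̂^{th}_j ≠ 0} = T. -/
import Mathlib


open Finset

/-- Thresholding recovers the support: if `|θ̂ - θ⁰|_∞ ≤ c` and the threshold
`δ` satisfies `c < δ ≤ θ⁰_min / 2`, then the support of the thresholded
estimator equals the support of `θ⁰`. -/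
theorem stmt_18 {p : ℕ} (θhat θ0 : Fin p → ℝ) (c δ : ℝ) (hc : 0 < c)
    (T : Finset (Fin p)) (hT : T = {j | θ0 j ≠ 0})
    (hTne : T.Nonempty)
    (hbound : ∀ j, |θhat j - θ0 j| ≤ c)
    (hδ1 : c < δ) (hδ2 : δ ≤ (T.inf' hTne fun j => |θ0 j|) / 2)
    (θth : Fin p → ℝ) (hθth : ∀ j, θth j = if |θhat j| ≥ δ then θhat j else 0) :
    {j | θth j ≠ 0} = {j | θ0 j ≠ 0} := by
  ext j
  simp only [Set.mem_setOf_eq, hθth j]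
  have hmem : ∀ i, i ∈ T ↔ θ0 i ≠ 0 := by
    intro i; rw [← Finset.mem_coe, hT]; simp
  constructor
  · intro h
    by_contra h0
    have hb := hbound j
    rw [h0, sub_zero] at hb
    have : ¬ (|θhat j| ≥ δ) := by linarith
    rw [if_neg this] at h
    exact h rfl
  · intro h0
    have hj : j ∈ T := (hmem j).mpr h0
    have hinf : T.inf' hTne (fun i => |θ0 i|) ≤ |θ0 j| := inf'_le _ hj
    have hb := hbound j
    have h1 : |θ0 j| - |θhat j| ≤ c := by
      calc |θ0 j| - |θhat j| ≤ |θ0 j - θhat j| := by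
            have := abs_sub_abs_le_abs_sub (θ0 j) (θhat j); linarith
        _ = |θhat j - θ0 j| := abs_sub_comm _ _
        _ ≤ c := hb
    have hge : |θhat j| ≥ δ := by linarith
    rw [if_pos hge]
    intro hz
    rw [hz, abs_zero] at hge
    linarith
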